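/- Every three-times differentiable solution h : (1,∞) → ℝ of the ODE −h'(x) + (1/2)(1−2x)·h''(x) + (1/6)(x−x²)·h'''(x) = 0 has the form h(x) = (c₀ + c₁x + c₂x²)/(x(1−x)) for constants c₀, c₁, c₂; equivalently h(x) = a₀(x−1)/x + a₁ + a₂·x/(x−1). -/

import Mathlib

open Set Filter Topology

lemma const_on_Ioi (f : ℝ → ℝ) (hf : ∀ x ∈ Ioi (1 : ℝ), HasDerivAt f 0 x) :
    ∀ x ∈ Ioi (1 : ℝ), f x = f 2 := by
  intro x hx
  have h2 : (2 : ℝ) ∈ Ioi (1 : ℝ) := by norm_num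
  refine (convex_Ioi (1 : ℝ)).is_const_of_fderivWithin_eq_zero
    (fun y hy => (hf y hy).differentiableAt.differentiableWithinAt) ?_ hx h2
  intro y hy
  rw [fderivWithin_of_isOpen isOpen_Ioi hy, (hf y hy).hasFDerivAt.fderiv]
  ext
  simp

theorem ode_solution_form (h : ℝ → ℝ)
    (hd1 : ∀ x ∈ Ioi (1 : ℝ), DifferentiableAt ℝ h x)
    (hd2 : ∀ x ∈ Ioi (1 : ℝ), DifferentiableAt ℝ (deriv h) x)
    (hd3 : ∀ x ∈ Ioi (1 : ℝ), DifferentiableAt ℝ (deriv (deriv h)) x)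
    (hode : ∀ x ∈ Ioi (1 : ℝ),
      -(deriv h x) + (1 / 2) * (1 - 2 * x) * deriv (deriv h) x
        + (1 / 6) * (x - x ^ 2) * deriv (deriv (deriv h)) x = 0) :
    (∃ c₀ c₁ c₂ : ℝ, ∀ x ∈ Ioi (1 : ℝ),
      h x = (c₀ + c₁ * x + c₂ * x ^ 2) / (x * (1 - x))) ∧
    (∃ a₀ a₁ a₂ : ℝ, ∀ x ∈ Ioi (1 : ℝ),
      h x = a₀ * ((x - 1) / x) + a₁ + a₂ * (x / (x - 1))) := by
  set g : ℝ → ℝ := fun x => (x - x ^ 2) * h x with hg_def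
  set g1 : ℝ → ℝ := fun x => (1 - 2 * x) * h x + (x - x ^ 2) * deriv h x with hg1_def
  set g2 : ℝ → ℝ := fun x =>
    -2 * h x + 2 * (1 - 2 * x) * deriv h x + (x - x ^ 2) * deriv (deriv h) x with hg2_def
  have hpoly : ∀ x : ℝ, HasDerivAt (fun x : ℝ => x - x ^ 2) (1 - 2 * x) x := by
    intro x
    simpa using (hasDerivAt_id x).fun_sub (hasDerivAt_pow 2 x)
  have hpoly2 : ∀ x : ℝ, HasDerivAt (fun x : ℝ => 1 - 2 * x) (-2) x := by
    intro x
    simpa using (hasDerivAt_const x (1:ℝ)).fun_sub ((hasDerivAt_id x).const_mul 2)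
  -- g2 has derivative 0
  have hG2 : ∀ x ∈ Ioi (1 : ℝ), HasDerivAt g2 0 x := by
    intro x hx
    have h1 := (hd1 x hx).hasDerivAt
    have h2 := (hd2 x hx).hasDerivAt
    have h3 := (hd3 x hx).hasDerivAt
    have hp4 : HasDerivAt (fun x : ℝ => 2 * (1 - 2 * x)) (-4) x := by
      have := (hpoly2 x).const_mul (2 : ℝ); norm_num at this; exact this
    have : HasDerivAt g2
        (-2 * deriv h x + ((-4) * deriv h x + 2 * (1 - 2 * x) * deriv (deriv h) x)
          + ((1 - 2 * x) * deriv (deriv h) x + (x - x ^ 2) * deriv (deriv (deriv h)) x)) x :=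
      HasDerivAt.add (HasDerivAt.add (h1.const_mul (-2)) (hp4.mul h2)) ((hpoly x).mul h3)
    convert this using 1
    have := hode x hx
    nlinarith [this]
  -- g1 has derivative g2
  have hG1 : ∀ x ∈ Ioi (1 : ℝ), HasDerivAt g1 (g2 x) x := by
    intro x hx
    have h1 := (hd1 x hx).hasDerivAt
    have h2 := (hd2 x hx).hasDerivAt
    have : HasDerivAt g1
        ((-2) * h x + (1 - 2 * x) * deriv h x
          + ((1 - 2 * x) * deriv h x + (x - x ^ 2) * deriv (deriv h) x)) x :=
      HasDerivAt.add ((hpoly2 x).mul h1) ((hpoly x).mul h2)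
    convert this using 1
    simp only [hg2_def]
    ring
  -- g has derivative g1
  have hG : ∀ x ∈ Ioi (1 : ℝ), HasDerivAt g (g1 x) x := by
    intro x hx
    exact (hpoly x).mul (hd1 x hx).hasDerivAt
  -- g2 is constant
  obtain ⟨A, hA⟩ : ∃ A, ∀ x ∈ Ioi (1 : ℝ), g2 x = A :=
    ⟨g2 2, const_on_Ioi g2 hG2⟩
  -- g1 x = A * x + B
  obtain ⟨B, hB⟩ : ∃ B, ∀ x ∈ Ioi (1 : ℝ), g1 x = A * x + B := by
    have key : ∀ x ∈ Ioi (1 : ℝ), HasDerivAt (fun x => g1 x - A * x) 0 x := by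
      intro x hx
      have := (hG1 x hx).fun_sub ((hasDerivAt_id x).const_mul A)
      rw [hA x hx] at this
      simpa using this
    refine ⟨g1 2 - A * 2, fun x hx => ?_⟩
    have := const_on_Ioi _ key x hx
    linarith [this]
  -- g x = A/2 * x^2 + B * x + C
  obtain ⟨C, hC⟩ : ∃ C, ∀ x ∈ Ioi (1 : ℝ), g x = A / 2 * x ^ 2 + B * x + C := by
    have key : ∀ x ∈ Ioi (1 : ℝ),
        HasDerivAt (fun x => g x - (A / 2 * x ^ 2 + B * x)) 0 x := by
      intro x hx
      have hp : HasDerivAt (fun x : ℝ => A / 2 * x ^ 2 + B * x) (A * x + B) x := by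
        have := ((hasDerivAt_pow 2 x).const_mul (A / 2)).fun_add ((hasDerivAt_id x).const_mul B)
        refine this.congr_deriv ?_
        ring
      have := (hG x hx).fun_sub hp
      rw [hB x hx] at this
      simpa using this
    refine ⟨g 2 - (A / 2 * 2 ^ 2 + B * 2), fun x hx => ?_⟩
    have := const_on_Ioi _ key x hx
    linarith [this]
  -- extract h
  have hx0 : ∀ x ∈ Ioi (1 : ℝ), x ≠ 0 ∧ (1 : ℝ) - x ≠ 0 := by
    intro x hx
    have : (1 : ℝ) < x := hx
    constructor <;> intro hc <;> nlinarith
  have hmain : ∀ x ∈ Ioi (1 : ℝ), h x = (C + B * x + A / 2 * x ^ 2) / (x * (1 - x)) := by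
    intro x hx
    obtain ⟨hx1, hx2⟩ := hx0 x hx
    have hg := hC x hx
    simp only [hg_def] at hg
    field_simp
    nlinarith [hg]
  refine ⟨⟨C, B, A / 2, hmain⟩, ⟨-C, 2 * C + B, -(C + B + A / 2), fun x hx => ?_⟩⟩
  obtain ⟨hx1, hx2⟩ := hx0 x hx
  rw [hmain x hx]
  have hx2' : x - 1 ≠ 0 := by intro hc; apply hx2; linarith
  field_simp
  ring
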